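/- Let 𝒞 be a pretriangulated category with a weight structure, let H' be a class of objects of the heart 𝒞^{w=0} closed under finite direct sums, and let 𝒞' be the smallest strictly full triangulated subcategory of 𝒞 containing H' (closed under isomorphisms, shifts and cones). Then every object X of 𝒞' admits a weight decomposition inside 𝒞': there is a distinguished triangle A → X → X' → A[1] with A an object of 𝒞' lying in 𝒞^{w≥0} and X' an object of 𝒞' lying in 𝒞^{w<0}. -/

import Mathlib

open CategoryTheory Category Limits Pretriangulated

/-- A weight structure on a pretriangulated category. -/
structure WeightStructure (C : Type*) [Category C] [HasZeroObject C] [HasShift C ℤ]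
    [Preadditive C] [∀ n : ℤ, (CategoryTheory.shiftFunctor C n).Additive]
    [Pretriangulated C] [HasBinaryBiproducts C] where
  le : C → Prop
  ge : C → Prop
  le_of_isZero : ∀ X : C, IsZero X → le X
  ge_of_isZero : ∀ X : C, IsZero X → ge X
  le_of_iso : ∀ {X Y : C}, (X ≅ Y) → le X → le Y
  ge_of_iso : ∀ {X Y : C}, (X ≅ Y) → ge X → ge Y
  le_biprod : ∀ X Y : C, le X → le Y → le (X ⊞ Y)
  ge_biprod : ∀ X Y : C, ge X → ge Y → ge (X ⊞ Y)
  le_retract : ∀ (X Y : C) (i : X ⟶ Y) (p : Y ⟶ X), i ≫ p = 𝟙 X → le Y → le X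
  ge_retract : ∀ (X Y : C) (i : X ⟶ Y) (p : Y ⟶ X), i ≫ p = 𝟙 X → ge Y → ge X
  ge_shift : ∀ X : C, ge X → ge (X⟦(-1 : ℤ)⟧)
  le_shift : ∀ X : C, le X → le (X⟦(1 : ℤ)⟧)
  orth : ∀ {X Y : C}, ge X → le Y → ∀ f : X ⟶ Y⟦(1 : ℤ)⟧, f = 0
  decomp : ∀ X : C, ∃ (A B : C) (f : B ⟶ X) (g : X ⟶ A) (h : A ⟶ B⟦(1 : ℤ)⟧),
    ge (B⟦(1 : ℤ)⟧) ∧ le A ∧ Triangle.mk f g h ∈ distTriang C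

variable {C : Type*} [Category C] [HasZeroObject C] [HasShift C ℤ]
  [Preadditive C] [∀ n : ℤ, (CategoryTheory.shiftFunctor C n).Additive]
  [Pretriangulated C] [HasBinaryBiproducts C]

/-- `X ∈ 𝒞^{w≤n}`, i.e. `X⟦n⟧ ∈ 𝒞^{w≤0}`. -/
def WeightStructure.leN (w : WeightStructure C) (n : ℤ) (X : C) : Prop := w.le (X⟦n⟧)

/-- The heart `𝒞^{w=0} = 𝒞^{w≥0} ∩ 𝒞^{w≤0}`. -/
def WeightStructure.heart (w : WeightStructure C) (X : C) : Prop := w.ge X ∧ w.le X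

/-- The smallest strictly full triangulated subcategory of `C` containing a class `S` of
objects: closure of `S` under isomorphisms, shifts and cones (it contains the zero
objects). -/
inductive TriaClosure (S : C → Prop) : C → Prop
  | of (X : C) (hX : S X) : TriaClosure S X
  | zero (X : C) (hX : IsZero X) : TriaClosure S X
  | iso {X Y : C} (e : X ≅ Y) (hX : TriaClosure S X) : TriaClosure S Y
  | shift (X : C) (n : ℤ) (hX : TriaClosure S X) : TriaClosure S (X⟦n⟧)
  | cone {T : Triangle C} (hT : T ∈ distTriang C) (h₁ : TriaClosure S T.obj₁)
      (h₂ : TriaClosure S T.obj₂) : TriaClosure S T.obj₃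

open ZeroObject in
lemma WeightStructure.isZero_shift_aux (X : C) (m : ℤ) (h : IsZero X) : IsZero (X⟦m⟧) :=
  (shiftFunctor C m).map_isZero h

/-- `le` is stable by upwards change of the shift index. -/
lemma WeightStructure.le_up (w : WeightStructure C) {X : C} {a b : ℤ} (hab : a ≤ b)
    (ha : w.le (X⟦a⟧)) : w.le (X⟦b⟧) := by
  have key : ∀ k : ℕ, w.le (X⟦a + (k : ℤ)⟧) := by
    intro k
    induction k with
    | zero => simpa using ha
    | succ k ih =>
      have h1 := w.le_shift _ ih
      exact w.le_of_iso
        ((shiftFunctorAdd' C (a + (k : ℤ)) 1 (a + ((k + 1 : ℕ) : ℤ))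
          (by push_cast; ring)).app X).symm h1
  have h2 := key (b - a).toNat
  rwa [show a + (((b - a).toNat : ℕ) : ℤ) = b by omega] at h2

/-- `ge` is stable by downwards change of the shift index. -/
lemma WeightStructure.ge_down (w : WeightStructure C) {X : C} {a b : ℤ} (hab : b ≤ a)
    (ha : w.ge (X⟦a⟧)) : w.ge (X⟦b⟧) := by
  have key : ∀ k : ℕ, w.ge (X⟦a - (k : ℤ)⟧) := by
    intro k
    induction k with
    | zero => simpa using ha
    | succ k ih =>
      have h1 := w.ge_shift _ ih
      exact w.ge_of_iso
        ((shiftFunctorAdd' C (a - (k : ℤ)) (-1) (a - ((k + 1 : ℕ) : ℤ))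
          (by push_cast; ring)).app X).symm h1
  have h2 := key (a - b).toNat
  rwa [show a - (((a - b).toNat : ℕ) : ℤ) = b by omega] at h2

/-- Orthogonality: there are no maps from `𝒞^{w≥n}` to `𝒞^{w≤n-1}`. -/
lemma WeightStructure.homZero (w : WeightStructure C) {n : ℤ} {P B : C}
    (hP : w.ge (P⟦n⟧)) (hB : w.le (B⟦n - 1⟧)) (f : P ⟶ B) : f = 0 := by
  have h0 : (shiftFunctor C n).map f ≫ ((shiftFunctorAdd' C (n-1) 1 n (by ring)).app B).hom
      = 0 := w.orth hP hB _
  have h1 : (shiftFunctor C n).map f = 0 := by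
    have := ((shiftFunctorAdd' C (n-1) 1 n (by ring)).app B).hom_inv_id
    calc (shiftFunctor C n).map f
        = ((shiftFunctor C n).map f ≫ ((shiftFunctorAdd' C (n-1) 1 n (by ring)).app B).hom) ≫
            ((shiftFunctorAdd' C (n-1) 1 n (by ring)).app B).inv := by
          rw [Category.assoc, this, Category.comp_id]
      _ = 0 := by rw [h0, zero_comp]
  apply (shiftFunctor C n).map_injective
  rw [h1, Functor.map_zero]

/-- Weight decomposition of any object at an arbitrary cut `n`. -/
lemma WeightStructure.decompN (w : WeightStructure C) (n : ℤ) (X : C) :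
    ∃ (A B : C) (f : A ⟶ X) (g : X ⟶ B) (h : B ⟶ A⟦(1 : ℤ)⟧),
      w.ge (A⟦n⟧) ∧ w.le (B⟦n - 1⟧) ∧ Triangle.mk f g h ∈ distTriang C := by
  obtain ⟨Ale, Bge, f₀, g₀, h₀, hge, hle, mem⟩ := w.decomp (X⟦n - 1⟧)
  let T := (Triangle.shiftFunctor C (1 - n)).obj (Triangle.mk f₀ g₀ h₀)
  let e : (X⟦n-1⟧)⟦1-n⟧ ≅ X := (shiftFunctorCompIsoId C (n-1) (1-n) (by ring)).app X
  have hT' : Triangle.mk (T.mor₁ ≫ e.hom) (e.inv ≫ T.mor₂) T.mor₃ ∈ distTriang C := by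
    refine isomorphic_distinguished _ (Triangle.shift_distinguished _ mem (1 - n)) _ ?_
    refine Triangle.isoMk _ _ (Iso.refl _) e.symm (Iso.refl _) ?_ ?_ ?_
    · exact (Category.assoc _ _ _).trans ((congrArg (fun x => T.mor₁ ≫ x) e.hom_inv_id).trans
        ((Category.comp_id _).trans (Category.id_comp _).symm))
    · exact Category.comp_id _
    · exact ((congrArg (fun x => T.mor₃ ≫ x) (CategoryTheory.Functor.map_id _ _)).trans
        (Category.comp_id _)).trans (Category.id_comp _).symm
  refine ⟨Bge⟦(1 - n : ℤ)⟧, Ale⟦(1 - n : ℤ)⟧, _, _, _, ?_, ?_, hT'⟩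
  · exact w.ge_of_iso ((shiftFunctorAdd' C (1 - n) n 1 (by ring)).app Bge) hge
  · exact w.le_of_iso ((shiftFunctorCompIsoId C (1 - n) (n - 1) (by ring)).app Ale).symm hle

/-- Retract criterion: an object receiving no map from `𝒞^{w≥n}` lies in `𝒞^{w≤n-1}`. -/
lemma WeightStructure.le_of_hom_zero (w : WeightStructure C) (n : ℤ) (W : C)
    (H : ∀ (P : C), w.ge (P⟦n⟧) → ∀ f : P ⟶ W, f = 0) : w.le (W⟦n - 1⟧) := by
  obtain ⟨A, B, f, g, h, hA, hB, mem⟩ := w.decompN n W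
  obtain ⟨r, hr⟩ := Triangle.yoneda_exact₂ _ mem (𝟙 W)
    (by exact (show f ≫ 𝟙 W = 0 by rw [H A hA f, zero_comp]))
  have hr' : g ≫ r = 𝟙 W := hr.symm
  refine w.le_retract _ _ ((shiftFunctor C (n-1)).map g) ((shiftFunctor C (n-1)).map r) ?_ hB
  erw [← CategoryTheory.Functor.map_comp, hr', CategoryTheory.Functor.map_id]

/-- `𝒞^{w≥n}` is stable under extensions (in the middle of a distinguished triangle). -/
lemma WeightStructure.ge_ext₂ (w : WeightStructure C) (n : ℤ) (T : Triangle C)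
    (hT : T ∈ distTriang C) (h₁ : w.ge (T.obj₁⟦n⟧)) (h₃ : w.ge (T.obj₃⟦n⟧)) :
    w.ge (T.obj₂⟦n⟧) := by
  obtain ⟨A, B, f, g, h, hA, hB, mem⟩ := w.decompN n T.obj₂
  have hg : g = 0 := by
    obtain ⟨k, hk⟩ := Triangle.yoneda_exact₂ _ hT g (w.homZero h₁ hB _)
    rw [hk, w.homZero h₃ hB k, comp_zero]
  obtain ⟨p, hp⟩ := Triangle.coyoneda_exact₂ _ mem (𝟙 T.obj₂)
    (by exact (show 𝟙 T.obj₂ ≫ g = 0 by rw [hg, comp_zero]))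
  have hp' : p ≫ f = 𝟙 T.obj₂ := hp.symm
  refine w.ge_retract _ _ ((shiftFunctor C n).map p) ((shiftFunctor C n).map f) ?_ hA
  erw [← CategoryTheory.Functor.map_comp, hp', CategoryTheory.Functor.map_id]

section ExactnessHelpers

/-- Exactness of `Hom(P, -)` at `obj₂⟦1⟧`. -/
lemma tri_ex₂s (S : Triangle C) (hS : S ∈ distTriang C) {P : C}
    (f : P ⟶ S.obj₂⟦(1 : ℤ)⟧) (hf : f ≫ S.mor₂⟦(1 : ℤ)⟧' = 0) :
    ∃ g : P ⟶ S.obj₁⟦(1 : ℤ)⟧, f = g ≫ S.mor₁⟦(1 : ℤ)⟧' := by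
  obtain ⟨g, hg⟩ := Triangle.coyoneda_exact₁ _ (rot_of_distTriang _ hS) f hf
  refine ⟨-g, ?_⟩
  rw [hg]
  exact (Preadditive.comp_neg g (S.mor₁⟦(1 : ℤ)⟧')).trans (Preadditive.neg_comp g _).symm

/-- Exactness of `Hom(P, -)` at `obj₃⟦1⟧`. -/
lemma tri_ex₃s (S : Triangle C) (hS : S ∈ distTriang C) {P : C}
    (f : P ⟶ S.obj₃⟦(1 : ℤ)⟧) (hf : f ≫ S.mor₃⟦(1 : ℤ)⟧' = 0) :
    ∃ g : P ⟶ S.obj₂⟦(1 : ℤ)⟧, f = g ≫ S.mor₂⟦(1 : ℤ)⟧' :=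
  tri_ex₂s S.rotate (rot_of_distTriang _ hS) f hf

/-- Exactness of `Hom(P, -)` at `obj₁⟦1⟧⟦1⟧`. -/
lemma tri_ex₁ss (S : Triangle C) (hS : S ∈ distTriang C) {P : C}
    (f : P ⟶ (S.obj₁⟦(1 : ℤ)⟧)⟦(1 : ℤ)⟧)
    (hf : f ≫ (S.mor₁⟦(1 : ℤ)⟧')⟦(1 : ℤ)⟧' = 0) :
    ∃ g : P ⟶ S.obj₃⟦(1 : ℤ)⟧, f = g ≫ S.mor₃⟦(1 : ℤ)⟧' := by
  obtain ⟨g, hg⟩ := tri_ex₂s S.rotate.rotate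
    (rot_of_distTriang _ (rot_of_distTriang _ hS)) f
    (by
      rw [show S.rotate.rotate.mor₂ = -S.mor₁⟦(1 : ℤ)⟧' from rfl]
      exact (congrArg (fun x => f ≫ x) (Functor.map_neg _)).trans
        ((Preadditive.comp_neg _ _).trans (neg_eq_zero.mpr hf)))
  exact ⟨g, hg⟩

end ExactnessHelpers

open ZeroObject in
/-- Main induction: every object of the triangulated closure of a class of heart objects
admits a weight decomposition inside the closure, at every cut `n`. -/
theorem TriaClosure.exists_weight_decomp (w : WeightStructure C) (H' : C → Prop)
    (hH' : ∀ X : C, H' X → w.heart X) :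
    ∀ X : C, TriaClosure H' X → ∀ n : ℤ,
      ∃ (A X' : C) (f : A ⟶ X) (g : X ⟶ X') (h : X' ⟶ A⟦(1 : ℤ)⟧),
        TriaClosure H' A ∧ TriaClosure H' X' ∧ w.ge (A⟦n⟧) ∧ w.le (X'⟦n - 1⟧) ∧
        Triangle.mk f g h ∈ distTriang C := by
  intro X hX
  induction hX with
  | of X hX =>
    intro n
    obtain ⟨hge, hle⟩ := hH' X hX
    rcases le_or_gt n 0 with hn | hn
    · refine ⟨X, 0, 𝟙 X, 0, 0, TriaClosure.of X hX, TriaClosure.zero 0 (isZero_zero C),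
        ?_, ?_, contractible_distinguished X⟩
      · exact w.ge_down hn (w.ge_of_iso ((shiftFunctorZero C ℤ).app X).symm hge)
      · exact w.le_of_isZero _ (WeightStructure.isZero_shift_aux _ _ (isZero_zero C))
    · refine ⟨0, X, 0, 𝟙 X, 0, TriaClosure.zero 0 (isZero_zero C), TriaClosure.of X hX,
        ?_, ?_, contractible_distinguished₁ X⟩
      · exact w.ge_of_isZero _ (WeightStructure.isZero_shift_aux _ _ (isZero_zero C))
      · exact w.le_up (by omega) (w.le_of_iso ((shiftFunctorZero C ℤ).app X).symm hle)
  | zero X hX =>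
    intro n
    refine ⟨X, 0, 𝟙 X, 0, 0, TriaClosure.zero X hX, TriaClosure.zero 0 (isZero_zero C),
      ?_, ?_, contractible_distinguished X⟩
    · exact w.ge_of_isZero _ (WeightStructure.isZero_shift_aux _ _ hX)
    · exact w.le_of_isZero _ (WeightStructure.isZero_shift_aux _ _ (isZero_zero C))
  | iso e hX ih =>
    intro n
    obtain ⟨A, X', f, g, h, c₁, c₂, hge, hle, mem⟩ := ih n
    refine ⟨A, X', f ≫ e.hom, e.inv ≫ g, h, c₁, c₂, hge, hle, ?_⟩
    refine isomorphic_distinguished _ mem _ ?_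
    exact Triangle.isoMk _ _ (Iso.refl _) e.symm (Iso.refl _) (by simp [Triangle.mk]) (by simp [Triangle.mk]) (by simp [Triangle.mk])
  | shift X m hX ih =>
    intro n
    obtain ⟨A, X', f, g, h, c₁, c₂, hge, hle, mem⟩ := ih (n + m)
    let T := (Triangle.shiftFunctor C m).obj (Triangle.mk f g h)
    have memT : T ∈ distTriang C := Triangle.shift_distinguished _ mem m
    refine ⟨A⟦m⟧, X'⟦m⟧, T.mor₁, T.mor₂, T.mor₃, TriaClosure.shift A m c₁,
      TriaClosure.shift X' m c₂, ?_, ?_, memT⟩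
    · exact w.ge_of_iso ((shiftFunctorAdd' C m n (n + m) (by ring)).app A) hge
    · exact w.le_of_iso ((shiftFunctorAdd' C m (n - 1) (n + m - 1) (by ring)).app X')
        (by rwa [show n + m - 1 = n + m - 1 from rfl] at hle)
  | @cone T hT h₁ h₂ ih₁ ih₂ =>
    intro n
    obtain ⟨A₁, B₁, p₁, q₁, r₁, cA₁, cB₁, hgeA₁, hleB₁, mem₁⟩ := ih₁ (n + 1)
    have hleB₁' : w.le (B₁⟦n⟧) := by rwa [show n + 1 - 1 = n by ring] at hleB₁
    obtain ⟨A₂, B₂, p₂, q₂, r₂, cA₂, cB₂, hgeA₂, hleB₂, mem₂⟩ := ih₂ n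
    have hgeA₁' : w.ge (A₁⟦n⟧) := w.ge_down (by omega) hgeA₁
    -- construct the map between the `w ≥` parts
    obtain ⟨k, hk'⟩ : ∃ k : A₁ ⟶ A₂, p₁ ≫ T.mor₁ = k ≫ p₂ :=
      Triangle.coyoneda_exact₂ _ mem₂ (p₁ ≫ T.mor₁) (w.homZero hgeA₁' hleB₂ _)
    obtain ⟨A₃, l, e, mem₃⟩ := distinguished_cocone_triangle k
    obtain ⟨c, hbc, hce⟩ : ∃ c : A₃ ⟶ T.obj₃,
        l ≫ c = p₂ ≫ T.mor₂ ∧ e ≫ p₁⟦(1 : ℤ)⟧' = c ≫ T.mor₃ :=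
      complete_distinguished_triangle_morphism (Triangle.mk k l e) T mem₃ hT p₁ p₂ hk'.symm
    obtain ⟨Z', g', δ, mem₄⟩ := distinguished_cocone_triangle c
    have cA₃ : TriaClosure H' A₃ := TriaClosure.cone mem₃ cA₁ cA₂
    have cZ' : TriaClosure H' Z' := TriaClosure.cone mem₄ cA₃ (TriaClosure.cone hT h₁ h₂)
    have hgeA₃ : w.ge (A₃⟦n⟧) := by
      refine w.ge_ext₂ n (Triangle.mk k l e).rotate (rot_of_distTriang _ mem₃) hgeA₂ ?_
      exact w.ge_of_iso ((shiftFunctorAdd' C 1 n (n + 1) (by ring)).app A₁) hgeA₁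
    have hleZ' : w.le (Z'⟦n - 1⟧) := by
      apply w.le_of_hom_zero n
      intro P hP ψ
      have vB₂ : ∀ f : P ⟶ B₂, f = 0 := fun f => w.homZero hP hleB₂ f
      have vB₁1 : ∀ f : P ⟶ B₁⟦(1 : ℤ)⟧, f = 0 := fun f =>
        w.homZero hP (w.le_of_iso ((shiftFunctorAdd' C 1 (n - 1) n (by ring)).app B₁) hleB₁') f
      -- Step 1: any map `P ⟶ A₃⟦1⟧` killed by `c⟦1⟧` is zero
      have hβ0 : ∀ β : P ⟶ A₃⟦(1 : ℤ)⟧, β ≫ c⟦(1 : ℤ)⟧' = 0 → β = 0 := by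
        intro β hβ
        have h1 : (β ≫ e⟦(1 : ℤ)⟧') ≫ (p₁⟦(1 : ℤ)⟧')⟦(1 : ℤ)⟧' = 0 := by
          calc (β ≫ e⟦(1 : ℤ)⟧') ≫ (p₁⟦(1 : ℤ)⟧')⟦(1 : ℤ)⟧'
              = β ≫ (e ≫ p₁⟦(1 : ℤ)⟧')⟦(1 : ℤ)⟧' := by
                rw [Functor.map_comp, Category.assoc]
            _ = (β ≫ c⟦(1 : ℤ)⟧') ≫ T.mor₃⟦(1 : ℤ)⟧' := by
                rw [hce, Functor.map_comp, Category.assoc]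
            _ = 0 := by rw [hβ, zero_comp]
        have h2 : β ≫ e⟦(1 : ℤ)⟧' = 0 := by
          obtain ⟨g, hg⟩ : ∃ g : P ⟶ B₁⟦(1 : ℤ)⟧,
              β ≫ e⟦(1 : ℤ)⟧' = g ≫ r₁⟦(1 : ℤ)⟧' :=
            tri_ex₁ss (Triangle.mk p₁ q₁ r₁) mem₁ (β ≫ e⟦(1 : ℤ)⟧') h1
          rw [hg, vB₁1 g, zero_comp]
        obtain ⟨θ, hθ⟩ : ∃ θ : P ⟶ A₂⟦(1 : ℤ)⟧, β = θ ≫ l⟦(1 : ℤ)⟧' :=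
          tri_ex₃s (Triangle.mk k l e) mem₃ β h2
        have h3 : (θ ≫ p₂⟦(1 : ℤ)⟧') ≫ T.mor₂⟦(1 : ℤ)⟧' = 0 := by
          calc (θ ≫ p₂⟦(1 : ℤ)⟧') ≫ T.mor₂⟦(1 : ℤ)⟧'
              = θ ≫ (p₂ ≫ T.mor₂)⟦(1 : ℤ)⟧' := by rw [Functor.map_comp, Category.assoc]
            _ = (θ ≫ l⟦(1 : ℤ)⟧') ≫ c⟦(1 : ℤ)⟧' := by
                rw [← hbc, Functor.map_comp, Category.assoc]
            _ = β ≫ c⟦(1 : ℤ)⟧' := by rw [← hθ]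
            _ = 0 := hβ
        obtain ⟨μ, hμ⟩ : ∃ μ : P ⟶ T.obj₁⟦(1 : ℤ)⟧,
            θ ≫ p₂⟦(1 : ℤ)⟧' = μ ≫ T.mor₁⟦(1 : ℤ)⟧' :=
          tri_ex₂s T hT (θ ≫ p₂⟦(1 : ℤ)⟧') h3
        obtain ⟨ν, hν⟩ : ∃ ν : P ⟶ A₁⟦(1 : ℤ)⟧, μ = ν ≫ p₁⟦(1 : ℤ)⟧' :=
          tri_ex₂s (Triangle.mk p₁ q₁ r₁) mem₁ μ (vB₁1 _)
        have h5 : (θ - ν ≫ k⟦(1 : ℤ)⟧') ≫ p₂⟦(1 : ℤ)⟧' = 0 := by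
          have e1 : ν ≫ (k ≫ p₂)⟦(1 : ℤ)⟧' = ν ≫ (p₁ ≫ T.mor₁)⟦(1 : ℤ)⟧' := by rw [← hk']
          calc (θ - ν ≫ k⟦(1 : ℤ)⟧') ≫ p₂⟦(1 : ℤ)⟧'
              = θ ≫ p₂⟦(1 : ℤ)⟧' - ν ≫ (k ≫ p₂)⟦(1 : ℤ)⟧' := by
                simp only [Preadditive.sub_comp, CategoryTheory.Functor.map_comp,
                  Category.assoc]
            _ = μ ≫ T.mor₁⟦(1 : ℤ)⟧' - (ν ≫ p₁⟦(1 : ℤ)⟧') ≫ T.mor₁⟦(1 : ℤ)⟧' := by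
                rw [hμ, e1]
                simp only [CategoryTheory.Functor.map_comp, Category.assoc]
            _ = 0 := by rw [← hν, sub_self]
        have h6 : θ = ν ≫ k⟦(1 : ℤ)⟧' := by
          obtain ⟨κ, hκ⟩ : ∃ κ : P ⟶ B₂, θ - ν ≫ k⟦(1 : ℤ)⟧' = κ ≫ r₂ :=
            Triangle.coyoneda_exact₁ _ mem₂ (θ - ν ≫ k⟦(1 : ℤ)⟧') h5
          rw [vB₂ κ, zero_comp] at hκ
          exact sub_eq_zero.mp hκ
        have hkl : k ≫ l = 0 := comp_distTriang_mor_zero₁₂ _ mem₃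
        calc β = θ ≫ l⟦(1 : ℤ)⟧' := hθ
          _ = ν ≫ (k ≫ l)⟦(1 : ℤ)⟧' := by rw [h6, Functor.map_comp, Category.assoc]
          _ = 0 := by rw [hkl, Functor.map_zero, comp_zero]
      -- Step 2: kill `ψ`
      have hψδ : ψ ≫ δ = 0 := by
        apply hβ0
        have hδc : δ ≫ c⟦(1 : ℤ)⟧' = 0 := comp_distTriang_mor_zero₃₁ _ mem₄
        rw [Category.assoc, hδc, comp_zero]
      obtain ⟨φ₀, hφ₀⟩ : ∃ φ₀ : P ⟶ T.obj₃, ψ = φ₀ ≫ g' :=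
        Triangle.coyoneda_exact₃ _ mem₄ ψ hψδ
      obtain ⟨γ, hγ⟩ : ∃ γ : P ⟶ A₁⟦(1 : ℤ)⟧, φ₀ ≫ T.mor₃ = γ ≫ p₁⟦(1 : ℤ)⟧' :=
        tri_ex₂s (Triangle.mk p₁ q₁ r₁) mem₁ (φ₀ ≫ T.mor₃) (vB₁1 _)
      have h2 : (γ ≫ k⟦(1 : ℤ)⟧') ≫ p₂⟦(1 : ℤ)⟧' = 0 := by
        have htu : T.mor₃ ≫ T.mor₁⟦(1 : ℤ)⟧' = 0 := comp_distTriang_mor_zero₃₁ _ hT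
        calc (γ ≫ k⟦(1 : ℤ)⟧') ≫ p₂⟦(1 : ℤ)⟧'
            = γ ≫ (k ≫ p₂)⟦(1 : ℤ)⟧' := by rw [Category.assoc, Functor.map_comp]
          _ = (γ ≫ p₁⟦(1 : ℤ)⟧') ≫ T.mor₁⟦(1 : ℤ)⟧' := by
              rw [← hk', Functor.map_comp, Category.assoc]
          _ = φ₀ ≫ (T.mor₃ ≫ T.mor₁⟦(1 : ℤ)⟧') := by rw [← hγ, Category.assoc]
          _ = 0 := by rw [htu, comp_zero]
      have h3 : γ ≫ k⟦(1 : ℤ)⟧' = 0 := by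
        obtain ⟨κ, hκ⟩ : ∃ κ : P ⟶ B₂, γ ≫ k⟦(1 : ℤ)⟧' = κ ≫ r₂ :=
          Triangle.coyoneda_exact₁ _ mem₂ (γ ≫ k⟦(1 : ℤ)⟧') h2
        rw [hκ, vB₂ κ, zero_comp]
      obtain ⟨ξ, hξ⟩ : ∃ ξ : P ⟶ A₃, γ = ξ ≫ e :=
        Triangle.coyoneda_exact₁ _ mem₃ γ h3
      have h4 : (φ₀ - ξ ≫ c) ≫ T.mor₃ = 0 := by
        calc (φ₀ - ξ ≫ c) ≫ T.mor₃
            = φ₀ ≫ T.mor₃ - ξ ≫ (c ≫ T.mor₃) := by rw [Preadditive.sub_comp, Category.assoc]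
          _ = γ ≫ p₁⟦(1 : ℤ)⟧' - (ξ ≫ e) ≫ p₁⟦(1 : ℤ)⟧' := by
              rw [hγ, ← hce, Category.assoc]
          _ = 0 := by rw [← hξ, sub_self]
      obtain ⟨η, hη⟩ : ∃ η : P ⟶ T.obj₂, φ₀ - ξ ≫ c = η ≫ T.mor₂ :=
        Triangle.coyoneda_exact₃ _ hT (φ₀ - ξ ≫ c) h4
      obtain ⟨ζ, hζ⟩ : ∃ ζ : P ⟶ A₂, η = ζ ≫ p₂ :=
        Triangle.coyoneda_exact₂ _ mem₂ η (vB₂ _)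
      have hcg : c ≫ g' = 0 := comp_distTriang_mor_zero₁₂ _ mem₄
      have key : ∀ x : P ⟶ A₃, (x ≫ c) ≫ g' = 0 := fun x => by
        rw [Category.assoc, hcg, comp_zero]
      calc ψ = φ₀ ≫ g' := hφ₀
        _ = (η ≫ T.mor₂ + ξ ≫ c) ≫ g' := by rw [sub_eq_iff_eq_add.mp hη]
        _ = ((ζ ≫ l) ≫ c) ≫ g' + (ξ ≫ c) ≫ g' := by
            rw [Preadditive.add_comp, hζ, Category.assoc ζ p₂, ← hbc, ← Category.assoc ζ l]
        _ = 0 := by rw [key, key, add_zero]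
    exact ⟨A₃, Z', c, g', δ, cA₃, cZ', hgeA₃, hleZ', mem₄⟩

/-- If `H'` is a class of objects of the heart closed under finite direct sums, then
every object `X` of the triangulated subcategory generated by `H'` admits a weight
decomposition `A → X → X' → A[1]` with `A`, `X'` again in that subcategory,
`A ∈ 𝒞^{w≥0}` and `X' ∈ 𝒞^{w<0}`. -/
theorem stmt_11 (w : WeightStructure C) (H' : C → Prop)
    (hH' : ∀ X : C, H' X → w.heart X)
    (hsum : ∀ X Y : C, H' X → H' Y → H' (X ⊞ Y)) :
    ∀ X : C, TriaClosure H' X →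
      ∃ (A X' : C) (f : A ⟶ X) (g : X ⟶ X') (h : X' ⟶ A⟦(1 : ℤ)⟧),
        TriaClosure H' A ∧ TriaClosure H' X' ∧ w.ge A ∧ w.leN (-1) X' ∧
        Triangle.mk f g h ∈ distTriang C := by
  intro X hX
  obtain ⟨A, X', f, g, h, c₁, c₂, hge, hle, mem⟩ :=
    TriaClosure.exists_weight_decomp w H' hH' X hX 0
  refine ⟨A, X', f, g, h, c₁, c₂, ?_, ?_, mem⟩
  · exact w.ge_of_iso ((shiftFunctorZero C ℤ).app A) hge
  · have h0 : (0 : ℤ) - 1 = -1 := by norm_num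
    rw [h0] at hle
    exact hle
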